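/- With h a K-strongly convex penalty on compact convex X, F(p,y) = h(p) + h*(y) − ⟨y,p⟩, and Q(y) = ∇h*(y) the induced choice map, the Fenchel coupling satisfies F(p, y′) ≤ F(p, y) + ⟨y′ − y, Q(y) − p⟩ + (1/(2K))‖y′ − y‖*² for all p ∈ X and y, y′ ∈ V*. -/

import Mathlib

/-- Key inequality: the maximizer `Q y` beats `Q y'` by a strong-convexity margin. -/
lemma stmt9_aux
    {E : Type*} [NormedAddCommGroup E] [InnerProductSpace ℝ E]
    (X : Set E) (hXconv : Convex ℝ X)
    (h : E → ℝ)
    (K : ℝ) (hK : 0 < K)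
    (hsc : ∀ x ∈ X, ∀ x' ∈ X, ∀ t ∈ Set.Icc (0 : ℝ) 1,
      h (t • x + (1 - t) • x') ≤ t * h x + (1 - t) * h x' - K / 2 * t * (1 - t) * ‖x' - x‖ ^ 2)
    (Q : E → E)
    (hQ : ∀ y : E, Q y ∈ X ∧ ∀ x ∈ X, (inner ℝ y x : ℝ) - h x ≤ (inner ℝ y (Q y) : ℝ) - h (Q y))
    (y y' : E) :
    (inner ℝ y (Q y') : ℝ) - h (Q y') + K / 2 * ‖Q y' - Q y‖ ^ 2 ≤
      (inner ℝ y (Q y) : ℝ) - h (Q y) := by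
  set q := Q y
  set q' := Q y'
  have hq : q ∈ X := (hQ y).1
  have hq' : q' ∈ X := (hQ y').1
  have key : ∀ t : ℝ, 0 < t → t ≤ 1 →
      (inner ℝ y q' : ℝ) - h q' + K / 2 * (1 - t) * ‖q' - q‖ ^ 2 ≤
        (inner ℝ y q : ℝ) - h q := by
    intro t ht0 ht1
    have hmem : t • q' + (1 - t) • q ∈ X :=
      hXconv hq' hq (le_of_lt ht0) (by linarith) (by ring)
    have hopt := (hQ y).2 _ hmem
    have hcv := hsc q' hq' q hq t ⟨le_of_lt ht0, ht1⟩
    have hin : (inner ℝ y (t • q' + (1 - t) • q) : ℝ)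
        = t * (inner ℝ y q' : ℝ) + (1 - t) * (inner ℝ y q : ℝ) := by
      simp [inner_add_right, inner_smul_right]
    have hnorm : ‖q - q'‖ = ‖q' - q‖ := by rw [norm_sub_rev]
    rw [hnorm] at hcv
    -- combine: t*(⟨y,q'⟩ - h q') + K/2 t (1-t) ‖q'-q‖² ≤ t*(⟨y,q⟩ - h q)
    have := hopt
    rw [hin] at this
    have hmul : t * ((inner ℝ y q' : ℝ) - h q' + K / 2 * (1 - t) * ‖q' - q‖ ^ 2)
        ≤ t * ((inner ℝ y q : ℝ) - h q) := by nlinarith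
    exact le_of_mul_le_mul_left (by linarith [hmul]) ht0
  -- let t → 0
  have hC : 0 ≤ K / 2 * ‖q' - q‖ ^ 2 := by positivity
  refine le_of_forall_pos_le_add ?_
  intro ε hε
  rcases eq_or_lt_of_le hC with hC0 | hCpos
  · have := key 1 one_pos le_rfl
    nlinarith
  · set t : ℝ := min 1 (ε / (K / 2 * ‖q' - q‖ ^ 2)) with ht
    have ht0 : 0 < t := lt_min one_pos (div_pos hε hCpos)
    have ht1 : t ≤ 1 := min_le_left _ _
    have := key t ht0 ht1
    have htc : t * (K / 2 * ‖q' - q‖ ^ 2) ≤ ε := by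
      have : t ≤ ε / (K / 2 * ‖q' - q‖ ^ 2) := min_le_right _ _
      calc t * (K / 2 * ‖q' - q‖ ^ 2)
          ≤ ε / (K / 2 * ‖q' - q‖ ^ 2) * (K / 2 * ‖q' - q‖ ^ 2) := by
            exact mul_le_mul_of_nonneg_right this (le_of_lt hCpos)
        _ = ε := div_mul_cancel₀ _ (ne_of_gt hCpos)
    nlinarith

theorem stmt9
    {E : Type*} [NormedAddCommGroup E] [InnerProductSpace ℝ E] [FiniteDimensional ℝ E]
    (X : Set E) (hXc : IsCompact X) (hXconv : Convex ℝ X) (hXne : X.Nonempty)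
    (h : E → ℝ) (hcont : ContinuousOn h X)
    (K : ℝ) (hK : 0 < K)
    (hsc : ∀ x ∈ X, ∀ x' ∈ X, ∀ t ∈ Set.Icc (0 : ℝ) 1,
      h (t • x + (1 - t) • x') ≤ t * h x + (1 - t) * h x' - K / 2 * t * (1 - t) * ‖x' - x‖ ^ 2)
    (Q : E → E)
    (hQ : ∀ y : E, Q y ∈ X ∧ ∀ x ∈ X, (inner ℝ y x : ℝ) - h x ≤ (inner ℝ y (Q y) : ℝ) - h (Q y)) :
    ∀ p ∈ X, ∀ y y' : E,
      h p + ((inner ℝ y' (Q y') : ℝ) - h (Q y')) - (inner ℝ y' p : ℝ) ≤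
        (h p + ((inner ℝ y (Q y) : ℝ) - h (Q y)) - (inner ℝ y p : ℝ))
          + (inner ℝ (y' - y) (Q y - p) : ℝ) + (1 / (2 * K)) * ‖y' - y‖ ^ 2 := by
  intro p hp y y'
  have H1 := stmt9_aux X hXconv h K hK hsc Q hQ y y'
  have H2 : (inner ℝ (y' - y) (Q y' - Q y) : ℝ) ≤ ‖y' - y‖ * ‖Q y' - Q y‖ :=
    real_inner_le_norm _ _
  have E1 : (inner ℝ (y' - y) (Q y' - Q y) : ℝ)
      = (inner ℝ y' (Q y') : ℝ) - (inner ℝ y (Q y') : ℝ)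
        - (inner ℝ y' (Q y) : ℝ) + (inner ℝ y (Q y) : ℝ) := by
    simp [inner_sub_left, inner_sub_right]; ring
  have E2 : (inner ℝ (y' - y) (Q y - p) : ℝ)
      = (inner ℝ y' (Q y) : ℝ) - (inner ℝ y (Q y) : ℝ)
        - (inner ℝ y' p : ℝ) + (inner ℝ y p : ℝ) := by
    simp [inner_sub_left, inner_sub_right]; ring
  have hsq : 0 ≤ (‖y' - y‖ - K * ‖Q y' - Q y‖) ^ 2 := sq_nonneg _
  have h2K : (0:ℝ) < 2 * K := by linarith
  have H3 : ‖y' - y‖ * ‖Q y' - Q y‖ - K / 2 * ‖Q y' - Q y‖ ^ 2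
      ≤ 1 / (2 * K) * ‖y' - y‖ ^ 2 := by
    rw [one_div, inv_mul_eq_div, le_div_iff₀ h2K]
    nlinarith [sq_nonneg (‖y' - y‖ - K * ‖Q y' - Q y‖)]
  rw [E2]
  linarith [E1 ▸ H2]
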